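/- In the antiferromagnetic Ising model P(σ) ∝ exp(−β Σ_{(i,j)∈E} σ_i σ_j + Σ_i h_i σ_i) on {0,1}^p with |h_i| ≤ h, if vertices a and b ARE adjacent, then P(σ_a = 1 | σ_b = 1) ≤ 1/(1 + e^{β − h}). -/

import Mathlib

open Classical Finset
noncomputable section

/-- `0/1` spin value as a real number. -/
def bval (x : Bool) : ℝ := if x then 1 else 0

/-- Hamiltonian of the antiferromagnetic Ising model on `{0,1}` configurations:
`H(σ) = -β Σ_{{i,j}∈E} σ_i σ_j + Σ_i h_i σ_i` (each edge counted once). -/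
def isingH {V : Type*} [Fintype V] (G : SimpleGraph V) (beta : ℝ) (hv : V → ℝ)
    (sig : V → Bool) : ℝ :=
  -beta * ((∑ i, ∑ j, if G.Adj i j then bval (sig i) * bval (sig j) else 0) / 2) +
    ∑ i, hv i * bval (sig i)

lemma bval_nonneg (x : Bool) : 0 ≤ bval x := by unfold bval; split <;> norm_num

lemma flip_le {p : ℕ} (G : SimpleGraph (Fin p))
    (beta h : ℝ) (hbeta : 0 < beta) (hv : Fin p → ℝ) (hh : ∀ i, |hv i| ≤ h)
    (a b : Fin p) (hadj : G.Adj a b) (σ : Fin p → Bool)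
    (ha : σ a = true) (hb : σ b = true) :
    isingH G beta hv σ + (beta - h) ≤ isingH G beta hv (Function.update σ a false) := by
  set σ' := Function.update σ a false with hσ'def
  have hne : a ≠ b := G.ne_of_adj hadj
  have hσ'a : σ' a = false := Function.update_self a false σ
  have hσ'j : ∀ j, j ≠ a → σ' j = σ j := fun j hj => Function.update_of_ne hj _ _
  set T : ℝ := ∑ j, if G.Adj a j then bval (σ j) else 0 with hT
  have hS : (∑ i, ∑ j, if G.Adj i j then bval (σ i) * bval (σ j) else 0)
      = (∑ i, ∑ j, if G.Adj i j then bval (σ' i) * bval (σ' j) else 0) + 2 * T := by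
    have key : ∀ i j, (if G.Adj i j then bval (σ i) * bval (σ j) else 0)
        = (if G.Adj i j then bval (σ' i) * bval (σ' j) else 0)
          + (if i = a then (if G.Adj a j then bval (σ j) else 0) else 0)
          + (if j = a then (if G.Adj i a then bval (σ' i) else 0) else 0) := by
      intro i j
      by_cases hi : i = a <;> by_cases hj : j = a
      · subst hi; subst hj; simp [G.irrefl]
      · subst hi; simp [hj, hσ'a, hσ'j j hj, ha, bval]
      · subst hj; simp [hi, hσ'a, hσ'j i hi, ha, bval]
      · simp [hi, hj, hσ'j i hi, hσ'j j hj]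
    calc (∑ i, ∑ j, if G.Adj i j then bval (σ i) * bval (σ j) else 0)
        = (∑ i, ∑ j, ((if G.Adj i j then bval (σ' i) * bval (σ' j) else 0)
          + (if i = a then (if G.Adj a j then bval (σ j) else 0) else 0)
          + (if j = a then (if G.Adj i a then bval (σ' i) else 0) else 0))) := by
          exact Finset.sum_congr rfl fun i _ => Finset.sum_congr rfl fun j _ => key i j
      _ = (∑ i, ∑ j, if G.Adj i j then bval (σ' i) * bval (σ' j) else 0)
          + (∑ i, ∑ j, if i = a then (if G.Adj a j then bval (σ j) else 0) else 0)
          + (∑ i, ∑ j, if j = a then (if G.Adj i a then bval (σ' i) else 0) else 0) := by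
          simp [Finset.sum_add_distrib]
      _ = (∑ i, ∑ j, if G.Adj i j then bval (σ' i) * bval (σ' j) else 0) + 2 * T := by
          have h1 : (∑ i, ∑ j, if i = a then (if G.Adj a j then bval (σ j) else 0) else 0)
              = T := by
            rw [hT]
            rw [Finset.sum_comm]
            refine Finset.sum_congr rfl fun j _ => ?_
            simp
          have h2 : (∑ i, ∑ j, if j = a then (if G.Adj i a then bval (σ' i) else 0) else 0)
              = T := by
            rw [hT]
            refine Finset.sum_congr rfl fun i _ => ?_
            rw [Finset.sum_ite_eq' univ a (fun _ => if G.Adj i a then bval (σ' i) else 0)]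
            simp only [Finset.mem_univ, if_true]
            by_cases hi : i = a
            · subst hi; simp [G.irrefl]
            · rw [hσ'j i hi]
              exact if_congr (by rw [G.adj_comm]) rfl rfl
          rw [h1, h2]; ring
  have hF : (∑ i, hv i * bval (σ i)) = (∑ i, hv i * bval (σ' i)) + hv a := by
    have key : ∀ i, hv i * bval (σ i)
        = hv i * bval (σ' i) + (if i = a then hv a else 0) := by
      intro i
      by_cases hi : i = a
      · subst hi; simp [hσ'a, ha, bval]
      · simp [hi, hσ'j i hi]
    rw [Finset.sum_congr rfl fun i _ => key i, Finset.sum_add_distrib,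
      Finset.sum_ite_eq' univ a (fun _ => hv a)]
    simp
  have hT1 : 1 ≤ T := by
    have := Finset.single_le_sum (f := fun j => if G.Adj a j then bval (σ j) else 0)
      (fun j _ => by split
                     · exact bval_nonneg _
                     · exact le_rfl) (Finset.mem_univ b)
    simpa [hT, hadj, hb, bval] using this
  have hha : hv a ≤ h := (abs_le.mp (hh a)).2
  unfold isingH
  rw [hS, hF]
  have : beta * 1 ≤ beta * T := by nlinarith
  nlinarith

/-- In the antiferromagnetic Ising model with fields bounded by `h`, if `a` and `b` are
adjacent then `P(σ_a = 1 | σ_b = 1) ≤ 1/(1 + e^(β - h))`. -/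
theorem ising_edge_cond_upper (p : ℕ) (G : SimpleGraph (Fin p)) [DecidableRel G.Adj]
    (beta h : ℝ) (hbeta : 0 < beta) (hv : Fin p → ℝ) (hh : ∀ i, |hv i| ≤ h)
    (a b : Fin p) (hadj : G.Adj a b) :
    (∑ sig : Fin p → Bool,
        if sig a = true ∧ sig b = true then Real.exp (isingH G beta hv sig) else 0) /
      (∑ sig : Fin p → Bool, if sig b = true then Real.exp (isingH G beta hv sig) else 0)
      ≤ 1 / (1 + Real.exp (beta - h)) := by
  have hne : a ≠ b := G.ne_of_adj hadj
  set E := Real.exp (beta - h) with hE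
  set N := ∑ sig : Fin p → Bool,
      if sig a = true ∧ sig b = true then Real.exp (isingH G beta hv sig) else 0 with hN
  set M := ∑ sig : Fin p → Bool,
      if sig a = false ∧ sig b = true then Real.exp (isingH G beta hv sig) else 0 with hM
  set D := ∑ sig : Fin p → Bool,
      if sig b = true then Real.exp (isingH G beta hv sig) else 0 with hD
  have hDNM : D = N + M := by
    rw [hD, hN, hM, ← Finset.sum_add_distrib]
    refine Finset.sum_congr rfl fun σ _ => ?_
    cases hσa : σ a <;> cases hσb : σ b <;> simp [hσa, hσb]
  have hNnonneg : 0 ≤ N := Finset.sum_nonneg fun σ _ => by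
    split
    · exact (Real.exp_pos _).le
    · exact le_rfl
  have hNpos : 0 < N := by
    have := Finset.single_le_sum
      (f := fun σ : Fin p → Bool => if σ a = true ∧ σ b = true
        then Real.exp (isingH G beta hv σ) else 0)
      (fun σ _ => by split
                     · exact (Real.exp_pos _).le
                     · exact le_rfl)
      (Finset.mem_univ (fun _ => true))
    have h2 : (0:ℝ) < Real.exp (isingH G beta hv (fun _ => true)) := Real.exp_pos _
    simp only [and_self, if_true] at this
    linarith
  have hMN : E * N ≤ M := by
    have hf : Function.Involutive (fun σ : Fin p → Bool => Function.update σ a (!(σ a))) := by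
      intro σ
      simp only [Function.update_self]
      rw [Bool.not_not, Function.update_idem, Function.update_eq_self]
    have hbij := hf.bijective
    have hMrw : M = ∑ σ : Fin p → Bool,
        if σ a = true ∧ σ b = true
          then Real.exp (isingH G beta hv (Function.update σ a false)) else 0 := by
      rw [hM]
      rw [Fintype.sum_bijective _ hbij
        (fun τ => if τ a = false ∧ τ b = true then Real.exp (isingH G beta hv τ) else 0)
        (fun σ => if σ a = true ∧ σ b = true
          then Real.exp (isingH G beta hv (Function.update σ a false)) else 0)]
      intro σ
      cases hσa : σ a
      · have h2 : Function.update (Function.update σ a true) a false = σ := by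
          rw [Function.update_idem, ← hσa, Function.update_eq_self]
        simp only [hσa, Bool.not_false]
        simp [Function.update_self, Function.update_of_ne (Ne.symm hne), hσa, h2]
      · simp only [hσa, Bool.not_true]
        simp [Function.update_self, Function.update_of_ne (Ne.symm hne), hσa]
    rw [hMrw, hN, Finset.mul_sum]
    refine Finset.sum_le_sum fun σ _ => ?_
    by_cases hcond : σ a = true ∧ σ b = true
    · rw [if_pos hcond, if_pos hcond, hE, ← Real.exp_add]
      exact Real.exp_le_exp.mpr (by
        have := flip_le G beta h hbeta hv hh a b hadj σ hcond.1 hcond.2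
        linarith)
    · simp [hcond]
  have hEpos : 0 < E := Real.exp_pos _
  have hDpos : 0 < D := by rw [hDNM]; nlinarith
  rw [div_le_div_iff₀ hDpos (by linarith : (0:ℝ) < 1 + E)]
  rw [hDNM]
  nlinarith
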